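/- Let D ⊂ ℝ³ be a nonempty bounded open set, and let θ ∈ ℂ³ satisfy θ · θ = 1 and Im θ ≠ 0. Let S² ⊂ ℝ³ be the unit sphere with its surface measure dα. Then for every C > 0 there exists ε > 0 such that every ν ∈ L²(S², ℂ) satisfying ‖e^{iθ·x} − ∫_{S²} ν(α) e^{iα·x} dα‖_{L²(D)} ≤ ε must have ‖ν‖_{L²(S²)} ≥ C. In other words, if ν_ε approximates the exponentially growing solution e^{iθ·x} in L²(D) to within ε by a superposition of plane waves e^{iα·x}, α ∈ S², then ‖ν_ε‖_{L²(S²)} → ∞ as ε → 0. -/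

import Mathlib

open MeasureTheory Complex Metric Filter
open scoped NNReal ENNReal

noncomputable section HerglotzAux

local notation "E3" => EuclideanSpace ℝ (Fin 3)
local notation "S2" => Metric.sphere (0 : EuclideanSpace ℝ (Fin 3)) 1



/-- surface measure -/
abbrev muS : Measure S2 := (volume : Measure (EuclideanSpace ℝ (Fin 3))).toSphere

/-- real dot product of a sphere point with a vector -/
def sdot (y : E3) (α : S2) : ℝ := ∑ k, (α : E3) k * y k

lemma sdot_continuous (y : E3) : Continuous (sdot y) := by
  refine continuous_finset_sum _ fun k _ => ?_
  exact (((EuclideanSpace.proj (𝕜 := ℝ) k).continuous.comp continuous_subtype_val).mul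
    continuous_const)

lemma sdot_abs_le (y : E3) (α : S2) : |sdot y α| ≤ ‖y‖ := by
  have h1 : sdot y α = (inner ℝ (α : E3) y : ℝ) := by
    simp [sdot, PiLp.inner_apply, RCLike.inner_apply, mul_comm]
  have h2 : ‖(α : E3)‖ = 1 := by
    have := α.2
    rwa [mem_sphere_zero_iff_norm] at this
  rw [h1]
  calc |(inner ℝ (α : E3) y : ℝ)| ≤ ‖(α : E3)‖ * ‖y‖ := abs_real_inner_le_norm _ _
  _ = ‖y‖ := by rw [h2, one_mul]

lemma sdot_sub (x y : E3) (α : S2) : sdot x α - sdot y α = sdot (x - y) α := by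
  simp [sdot, Finset.sum_sub_distrib, mul_sub]

/-- norm of the basic exponential -/
lemma norm_exp_aux (r s : ℝ) (z : ℂ) :
    ‖Complex.exp (Complex.I * r + z * (Complex.I * s))‖ = Real.exp (-(z.im * s)) := by
  rw [Complex.norm_exp]
  congr 1
  simp only [Complex.add_re, Complex.mul_re, Complex.I_re, Complex.I_im, Complex.ofReal_re,
    Complex.ofReal_im, Complex.mul_im]
  ring

lemma norm_exp_aux' (r : ℝ) : ‖Complex.exp (Complex.I * r)‖ = 1 := by
  have := norm_exp_aux r 0 0
  simpa using this

lemma norm_exp_I_sub (s t : ℝ) :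
    ‖Complex.exp (Complex.I * s) - Complex.exp (Complex.I * t)‖ ≤ |s - t| := by
  have h : ∀ u : ℝ, HasDerivAt (fun u : ℝ => Complex.exp (Complex.I * u))
      (Complex.I * Complex.exp (Complex.I * u)) u := by
    intro u
    have h1 : HasDerivAt (fun u : ℝ => (Complex.I * u : ℂ)) Complex.I u := by
      simpa using ((hasDerivAt_id (u : ℂ)).const_mul Complex.I).comp_ofReal
    simpa [mul_comm] using h1.cexp
  have := Convex.norm_image_sub_le_of_norm_hasDerivWithin_le
    (f := fun u : ℝ => Complex.exp (Complex.I * u)) (C := 1) (s := Set.univ)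
    (fun u _ => (h u).hasDerivWithinAt) (fun u _ => by
      simp [Complex.norm_exp, norm_exp_aux']) convex_univ (Set.mem_univ t) (Set.mem_univ s)
  simpa [Real.dist_eq, abs_sub_comm] using this

lemma sum_cast (x : E3) (y : E3) :
    (∑ k, ((x k : ℂ) * (y k : ℂ))) = ((∑ k, x k * y k : ℝ) : ℂ) := by
  push_cast; ring






def Wf (ν : S2 → ℂ) (x : E3) : ℂ :=
  ∫ α, ν α * Complex.exp (Complex.I *
      ∑ k, ((α : E3) k : ℂ) * (x k : ℂ)) ∂muS

def Ff (x₀ v : E3) (ν : S2 → ℂ) (z : ℂ) : ℂ :=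
  ∫ α, ν α * Complex.exp (Complex.I * (sdot x₀ α : ℝ) + z * (Complex.I * (sdot v α : ℝ))) ∂muS

lemma Wf_eq (ν : S2 → ℂ) (x : E3) :
    Wf ν x = ∫ α, ν α * Complex.exp (Complex.I * ((sdot x α : ℝ) : ℂ)) ∂muS := by
  unfold Wf
  refine integral_congr_ae (Eventually.of_forall fun α => ?_)
  dsimp only
  rw [sum_cast (α : E3) x]
  rfl

lemma cont_exp_arg (x₀ v : E3) (z : ℂ) : Continuous fun α : S2 =>
    Complex.exp (Complex.I * (sdot x₀ α : ℝ) + z * (Complex.I * (sdot v α : ℝ))) := by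
  apply Continuous.cexp
  exact ((continuous_const.mul (Complex.continuous_ofReal.comp (sdot_continuous x₀))).add
    (continuous_const.mul (continuous_const.mul (Complex.continuous_ofReal.comp (sdot_continuous v)))))

lemma norm_exp_le (v : E3) (α : S2) {z : ℂ} {R : ℝ} (hz : ‖z‖ ≤ R) (r : ℝ) :
    ‖Complex.exp (Complex.I * r + z * (Complex.I * (sdot v α : ℝ)))‖ ≤ Real.exp (R * ‖v‖) := by
  rw [norm_exp_aux]
  apply Real.exp_le_exp.2
  calc -(z.im * sdot v α) ≤ |z.im * sdot v α| := neg_le_abs _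
  _ = |z.im| * |sdot v α| := abs_mul _ _
  _ ≤ ‖z‖ * ‖v‖ := by
      apply mul_le_mul (Complex.abs_im_le_norm z) (sdot_abs_le v α) (abs_nonneg _)
      exact norm_nonneg z
  _ ≤ R * ‖v‖ := by
      apply mul_le_mul_of_nonneg_right hz (norm_nonneg v)

lemma integrable_Ff_integrand {ν : S2 → ℂ} (hν : Integrable ν muS) (x₀ v : E3) (z : ℂ) :
    Integrable (fun α => ν α * Complex.exp (Complex.I * (sdot x₀ α : ℝ)
      + z * (Complex.I * (sdot v α : ℝ)))) muS := by
  apply Integrable.mono' (hν.norm.mul_const (Real.exp (‖z‖ * ‖v‖)))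
  · exact hν.aestronglyMeasurable.mul (cont_exp_arg x₀ v z).aestronglyMeasurable
  · refine Eventually.of_forall fun α => ?_
    rw [norm_mul]
    exact mul_le_mul_of_nonneg_left (norm_exp_le v α le_rfl _) (norm_nonneg _)

lemma integrable_W_integrand {ν : S2 → ℂ} (hν : Integrable ν muS) (x : E3) :
    Integrable (fun α => ν α * Complex.exp (Complex.I * ((sdot x α : ℝ) : ℂ))) muS := by
  apply Integrable.mono' hν.norm
  · exact hν.aestronglyMeasurable.mul
      (Continuous.cexp (continuous_const.mul
        (Complex.continuous_ofReal.comp (sdot_continuous x)))).aestronglyMeasurable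
  · refine Eventually.of_forall fun α => ?_
    rw [norm_mul, norm_exp_aux', mul_one]

lemma Ff_hasDerivAt (x₀ v : E3) {ν : S2 → ℂ} (hν : Integrable ν muS) (z₀ : ℂ) :
    HasDerivAt (Ff x₀ v ν)
      (∫ α, ν α * (Complex.exp (Complex.I * (sdot x₀ α : ℝ)
        + z₀ * (Complex.I * (sdot v α : ℝ))) * (Complex.I * (sdot v α : ℝ))) ∂muS) z₀ := by
  have key := hasDerivAt_integral_of_dominated_loc_of_deriv_le (μ := muS)
    (F := fun z α => ν α * Complex.exp (Complex.I * (sdot x₀ α : ℝ)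
        + z * (Complex.I * (sdot v α : ℝ))))
    (F' := fun z α => ν α * (Complex.exp (Complex.I * (sdot x₀ α : ℝ)
        + z * (Complex.I * (sdot v α : ℝ))) * (Complex.I * (sdot v α : ℝ))))
    (x₀ := z₀)
    (bound := fun α => ‖ν α‖ * (Real.exp ((‖z₀‖ + 1) * ‖v‖) * ‖v‖))
    (Metric.ball_mem_nhds z₀ one_pos)
    (Eventually.of_forall fun z =>
      (hν.aestronglyMeasurable.mul (cont_exp_arg x₀ v z).aestronglyMeasurable))
    (integrable_Ff_integrand hν x₀ v z₀)
    (hν.aestronglyMeasurable.mul ((cont_exp_arg x₀ v z₀).mul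
      (continuous_const.mul
        (Complex.continuous_ofReal.comp (sdot_continuous v)))).aestronglyMeasurable)
    (Eventually.of_forall fun α => fun z hz => ?_)
    (hν.norm.mul_const _)
    (Eventually.of_forall fun α => fun z hz => ?_)
  · exact key.2
  · -- norm bound on F'
    rw [norm_mul, norm_mul, norm_mul, Complex.norm_I, one_mul]
    apply mul_le_mul_of_nonneg_left _ (norm_nonneg _)
    have h1 : ‖z‖ ≤ ‖z₀‖ + 1 := by
      have := mem_ball_iff_norm.1 hz
      have h2 := norm_sub_norm_le z z₀
      linarith
    apply mul_le_mul (norm_exp_le v α h1 _) ?_ (norm_nonneg _) (Real.exp_nonneg _)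
    rw [Complex.norm_real]
    exact sdot_abs_le v α
  · -- HasDerivAt of integrand
    have h1 : HasDerivAt (fun z : ℂ => Complex.I * (sdot x₀ α : ℝ)
        + z * (Complex.I * (sdot v α : ℝ))) (Complex.I * (sdot v α : ℝ)) z := by
      simpa using ((hasDerivAt_id z).mul_const (Complex.I * (sdot v α : ℝ))).const_add
        (Complex.I * ((sdot x₀ α : ℝ) : ℂ))
    exact (h1.cexp).const_mul (ν α)


lemma Ff_differentiable (x₀ v : E3) {ν : S2 → ℂ} (hν : Integrable ν muS) :
    Differentiable ℂ (Ff x₀ v ν) := fun z => (Ff_hasDerivAt x₀ v hν z).differentiableAt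

lemma Ff_norm_le (x₀ v : E3) {ν : S2 → ℂ} (hν : Integrable ν muS) {z : ℂ} {R : ℝ}
    (hz : ‖z‖ ≤ R) : ‖Ff x₀ v ν z‖ ≤ (∫ α, ‖ν α‖ ∂muS) * Real.exp (R * ‖v‖) := by
  unfold Ff
  calc ‖∫ α, ν α * Complex.exp (Complex.I * (sdot x₀ α : ℝ)
      + z * (Complex.I * (sdot v α : ℝ))) ∂muS‖
      ≤ ∫ α, ‖ν α‖ * Real.exp (R * ‖v‖) ∂muS := by
        apply norm_integral_le_of_norm_le (hν.norm.mul_const _)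
        refine Eventually.of_forall fun α => ?_
        rw [norm_mul]
        exact mul_le_mul_of_nonneg_left (norm_exp_le v α hz _) (norm_nonneg _)
  _ = (∫ α, ‖ν α‖ ∂muS) * Real.exp (R * ‖v‖) := integral_mul_const _ _

lemma Ff_real_norm_le (x₀ v : E3) {ν : S2 → ℂ} (hν : Integrable ν muS) (t : ℝ) :
    ‖Ff x₀ v ν t‖ ≤ ∫ α, ‖ν α‖ ∂muS := by
  unfold Ff
  calc ‖∫ α, ν α * Complex.exp (Complex.I * (sdot x₀ α : ℝ)
      + (t : ℂ) * (Complex.I * (sdot v α : ℝ))) ∂muS‖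
      ≤ ∫ α, ‖ν α‖ ∂muS := by
        apply norm_integral_le_of_norm_le hν.norm
        refine Eventually.of_forall fun α => ?_
        rw [norm_mul, norm_exp_aux]
        simp

lemma Ff_dist_le (x₀ v : E3) {ν : S2 → ℂ} (hν : Integrable ν muS) {L R : ℝ}
    (hL : (∫ α, ‖ν α‖ ∂muS) ≤ L) (hR : 0 ≤ R) {z₁ z₂ : ℂ}
    (h1 : z₁ ∈ closedBall (0 : ℂ) R) (h2 : z₂ ∈ closedBall (0 : ℂ) R) :
    ‖Ff x₀ v ν z₁ - Ff x₀ v ν z₂‖ ≤ (L * ‖v‖ * Real.exp (R * ‖v‖)) * ‖z₁ - z₂‖ := by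
  have hder : ∀ z ∈ closedBall (0 : ℂ) R, HasDerivWithinAt (Ff x₀ v ν)
      (∫ α, ν α * (Complex.exp (Complex.I * (sdot x₀ α : ℝ)
        + z * (Complex.I * (sdot v α : ℝ))) * (Complex.I * (sdot v α : ℝ))) ∂muS)
      (closedBall (0 : ℂ) R) z :=
    fun z _ => (Ff_hasDerivAt x₀ v hν z).hasDerivWithinAt
  have hbd : ∀ z ∈ closedBall (0 : ℂ) R,
      ‖∫ α, ν α * (Complex.exp (Complex.I * (sdot x₀ α : ℝ)
        + z * (Complex.I * (sdot v α : ℝ))) * (Complex.I * (sdot v α : ℝ))) ∂muS‖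
      ≤ L * ‖v‖ * Real.exp (R * ‖v‖) := by
    intro z hz
    have hz' : ‖z‖ ≤ R := by simpa [dist_eq_norm] using (mem_closedBall_iff_norm.1 hz)
    calc ‖∫ α, ν α * (Complex.exp (Complex.I * (sdot x₀ α : ℝ)
        + z * (Complex.I * (sdot v α : ℝ))) * (Complex.I * (sdot v α : ℝ))) ∂muS‖
        ≤ ∫ α, ‖ν α‖ * (Real.exp (R * ‖v‖) * ‖v‖) ∂muS := by
          apply norm_integral_le_of_norm_le (hν.norm.mul_const _)
          refine Eventually.of_forall fun α => ?_
          rw [norm_mul, norm_mul, norm_mul, Complex.norm_I, one_mul]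
          apply mul_le_mul_of_nonneg_left _ (norm_nonneg _)
          apply mul_le_mul (norm_exp_le v α hz' _) ?_ (norm_nonneg _) (Real.exp_nonneg _)
          rw [Complex.norm_real]
          exact sdot_abs_le v α
    _ = (∫ α, ‖ν α‖ ∂muS) * (Real.exp (R * ‖v‖) * ‖v‖) := integral_mul_const _ _
    _ ≤ L * (Real.exp (R * ‖v‖) * ‖v‖) := by
        apply mul_le_mul_of_nonneg_right hL
        positivity
    _ = L * ‖v‖ * Real.exp (R * ‖v‖) := by ring
  have := Convex.norm_image_sub_le_of_norm_hasDerivWithin_le hder hbd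
    (convex_closedBall _ _) h2 h1
  exact this

lemma sdot_add_smul (x₀ v : E3) (t : ℝ) (α : S2) :
    sdot (x₀ + t • v) α = sdot x₀ α + t * sdot v α := by
  simp only [sdot, PiLp.add_apply, PiLp.smul_apply, smul_eq_mul, mul_add,
    Finset.sum_add_distrib, Finset.mul_sum]
  congr 1
  exact Finset.sum_congr rfl fun k _ => by ring

lemma Ff_real (x₀ v : E3) (ν : S2 → ℂ) (t : ℝ) :
    Ff x₀ v ν t = Wf ν (x₀ + t • v) := by
  rw [Wf_eq]
  unfold Ff
  refine integral_congr_ae (Eventually.of_forall fun α => ?_)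
  dsimp only
  rw [sdot_add_smul]
  congr 1
  push_cast
  ring

lemma Wf_sub_le (x y : E3) {ν : S2 → ℂ} (hν : Integrable ν muS) :
    ‖Wf ν x - Wf ν y‖ ≤ (∫ α, ‖ν α‖ ∂muS) * ‖x - y‖ := by
  rw [Wf_eq, Wf_eq, ← integral_sub (integrable_W_integrand hν x) (integrable_W_integrand hν y)]
  calc ‖∫ α, (ν α * Complex.exp (Complex.I * ((sdot x α : ℝ) : ℂ))
        - ν α * Complex.exp (Complex.I * ((sdot y α : ℝ) : ℂ))) ∂muS‖
      ≤ ∫ α, ‖ν α‖ * ‖x - y‖ ∂muS := by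
        apply norm_integral_le_of_norm_le (hν.norm.mul_const _)
        refine Eventually.of_forall fun α => ?_
        rw [← mul_sub, norm_mul]
        apply mul_le_mul_of_nonneg_left _ (norm_nonneg _)
        calc ‖Complex.exp (Complex.I * ((sdot x α : ℝ) : ℂ))
            - Complex.exp (Complex.I * ((sdot y α : ℝ) : ℂ))‖
            ≤ |sdot x α - sdot y α| := norm_exp_I_sub _ _
        _ = |sdot (x - y) α| := by rw [sdot_sub]
        _ ≤ ‖x - y‖ := sdot_abs_le _ _
  _ = (∫ α, ‖ν α‖ ∂muS) * ‖x - y‖ := integral_mul_const _ _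







lemma compact_extract {R : ℝ} (κ : ℝ≥0) (M : ℝ) (f : ℕ → ℂ → ℂ)
    (hlip : ∀ n, LipschitzOnWith κ (f n) (closedBall (0 : ℂ) R))
    (hbd : ∀ n, ∀ z ∈ closedBall (0 : ℂ) R, ‖f n z‖ ≤ M) :
    ∃ (F : ℂ → ℂ) (φ : ℕ → ℕ), StrictMono φ ∧
      TendstoUniformlyOn (fun n => f (φ n)) F atTop (closedBall (0 : ℂ) R) := by
  classical
  set K : Set ℂ := closedBall (0 : ℂ) R with hK
  haveI : CompactSpace K := isCompact_iff_compactSpace.mp (isCompact_closedBall 0 R)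
  set T : Set (K → ℂ) := {g | LipschitzWith κ g ∧ ∀ x, ‖g x‖ ≤ M} with hT
  set S : Set C(K, ℂ) := {g | LipschitzWith κ g ∧ ∀ x, ‖g x‖ ≤ M} with hS
  have hTS : (fun (g : C(K, ℂ)) => (g : K → ℂ)) '' S = T := by
    ext g
    constructor
    · rintro ⟨g₀, hg₀, rfl⟩
      exact hg₀
    · intro hg
      exact ⟨⟨g, hg.1.continuous⟩, hg, rfl⟩
  have hTclosed : IsClosed T := by
    have : T = (⋂ (x : K) (y : K), {g : K → ℂ | dist (g x) (g y) ≤ κ * dist x y}) ∩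
        ⋂ (x : K), {g : K → ℂ | ‖g x‖ ≤ M} := by
      ext g
      simp only [Set.mem_inter_iff, Set.mem_iInter, Set.mem_setOf_eq, hT,
        lipschitzWith_iff_dist_le_mul]
    rw [this]
    exact IsClosed.inter
      (isClosed_iInter fun x => isClosed_iInter fun y =>
        isClosed_le ((continuous_apply x).dist (continuous_apply y)) continuous_const)
      (isClosed_iInter fun x => isClosed_le (continuous_apply x).norm continuous_const)
  have hTsub : T ⊆ Set.pi Set.univ fun _ => closedBall (0 : ℂ) M := by
    intro g hg x _
    simpa [mem_closedBall_zero_iff] using hg.2 x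
  have hTcompact : IsCompact T :=
    IsCompact.of_isClosed_subset
      (isCompact_univ_pi fun _ => isCompact_closedBall 0 M) hTclosed hTsub
  have hS1 : IsCompact ((fun (g : C(K, ℂ)) => (g : K → ℂ)) '' S) := hTS ▸ hTcompact
  have hS2 : Equicontinuous ((↑) : S → K → ℂ) := by
    apply Metric.equicontinuous_of_continuity_modulus (fun r => κ * r)
    · have : Continuous fun r : ℝ => (κ : ℝ) * r := continuous_const.mul continuous_id
      simpa using this.tendsto 0
    · intro x y i
      exact (i.2.1).dist_le_mul x y
  have hScompact : IsCompact S := ArzelaAscoli.isCompact_of_equicontinuous S hS1 hS2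
  set seq : ℕ → C(K, ℂ) := fun n => ⟨K.restrict (f n), ((hlip n).to_restrict).continuous⟩
    with hseq
  have hmem : ∀ n, seq n ∈ S := fun n => ⟨(hlip n).to_restrict, fun x => hbd n x x.2⟩
  obtain ⟨a, _, φ, hφ, hconv⟩ := hScompact.tendsto_subseq hmem
  have huniform : TendstoUniformly (fun n (x : K) => f (φ n) x) a atTop :=
    ContinuousMap.tendsto_iff_tendstoUniformly.1 hconv
  refine ⟨fun z => if h : z ∈ K then a ⟨z, h⟩ else 0, φ, hφ, ?_⟩
  rw [tendstoUniformlyOn_iff_tendstoUniformly_comp_coe]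
  have : ((fun z => if h : z ∈ K then a ⟨z, h⟩ else 0) ∘ (fun x : K => (x : ℂ)))
      = fun x : K => a x := by
    funext x
    simp only [Function.comp_apply, dif_pos x.2]
  rw [this]
  exact huniform





def gf (θ : Fin 3 → ℂ) (x : E3) : ℂ := Complex.exp (Complex.I * ∑ k, θ k * (x k : ℂ))

def Gg (θ : Fin 3 → ℂ) (x₀ v : E3) (z : ℂ) : ℂ :=
  Complex.exp ((Complex.I * ∑ k, θ k * (x₀ k : ℂ)) + z * (Complex.I * ∑ k, θ k * (v k : ℂ)))

lemma gf_continuous (θ : Fin 3 → ℂ) : Continuous (gf θ) := by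
  apply Continuous.cexp
  apply continuous_const.mul
  exact continuous_finset_sum _ fun k _ => continuous_const.mul
    (Complex.continuous_ofReal.comp (EuclideanSpace.proj (𝕜 := ℝ) k).continuous)

lemma Gg_differentiable (θ : Fin 3 → ℂ) (x₀ v : E3) : Differentiable ℂ (Gg θ x₀ v) := by
  apply Differentiable.cexp
  exact (differentiable_id.mul_const _).const_add _

lemma gf_line (θ : Fin 3 → ℂ) (x₀ v : E3) (t : ℝ) :
    gf θ (x₀ + t • v) = Gg θ x₀ v t := by
  unfold gf Gg
  congr 1
  have hcoord : ∀ k, (((x₀ + t • v) k : ℝ) : ℂ) = (x₀ k : ℂ) + (t : ℂ) * (v k : ℂ) := by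
    intro k
    have : (x₀ + t • v) k = x₀ k + t * v k := by
      simp [PiLp.add_apply, PiLp.smul_apply]
    rw [this]; push_cast; ring
  have h1 : (∑ k, θ k * (((x₀ + t • v) k : ℝ) : ℂ))
      = (∑ k, θ k * (x₀ k : ℂ)) + (t : ℂ) * ∑ k, θ k * (v k : ℂ) := by
    rw [Finset.mul_sum, ← Finset.sum_add_distrib]
    refine Finset.sum_congr rfl fun k _ => ?_
    rw [hcoord k]; ring
  rw [h1]; ring

lemma Gg_norm (θ : Fin 3 → ℂ) (x₀ v : E3) (t : ℝ) :
    ‖Gg θ x₀ v t‖ = Real.exp (-(∑ k, (θ k).im * x₀ k) + t * (-(∑ k, (θ k).im * v k))) := by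
  unfold Gg
  rw [Complex.norm_exp]
  congr 1
  have him : ∀ (y : E3), (∑ k, θ k * (y k : ℂ)).im = ∑ k, (θ k).im * y k := by
    intro y
    rw [Complex.im_sum]
    exact Finset.sum_congr rfl fun k _ => by simp [Complex.mul_im]
  simp only [Complex.add_re, Complex.mul_re, Complex.I_re, Complex.I_im, Complex.ofReal_re,
    Complex.ofReal_im, Complex.mul_im, him]
  ring



end HerglotzAux
section MainProof

open MeasureTheory Complex Metric Filter
open scoped NNReal ENNReal Topology

set_option maxHeartbeats 1600000 in
theorem herglotz_coefficients_blow_up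
    (D : Set (EuclideanSpace ℝ (Fin 3)))
    (hDo : IsOpen D) (hDb : Bornology.IsBounded D) (hDne : D.Nonempty)
    (θ : Fin 3 → ℂ) (hθ : (∑ k, θ k * θ k) = 1) (hIm : ∃ k, (θ k).im ≠ 0) :
    ∀ C : ℝ, 0 < C → ∃ ε : ℝ, 0 < ε ∧
      ∀ ν : Metric.sphere (0 : EuclideanSpace ℝ (Fin 3)) 1 → ℂ,
        MemLp ν 2 (volume : Measure (EuclideanSpace ℝ (Fin 3))).toSphere →
        eLpNorm (fun x : EuclideanSpace ℝ (Fin 3) =>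
            Complex.exp (Complex.I * ∑ k, θ k * (x k : ℂ)) -
            ∫ α, ν α * Complex.exp (Complex.I *
                ∑ k, ((α : EuclideanSpace ℝ (Fin 3)) k : ℂ) * (x k : ℂ))
              ∂(volume : Measure (EuclideanSpace ℝ (Fin 3))).toSphere)
          2 (volume.restrict D) ≤ ENNReal.ofReal ε →
        ENNReal.ofReal C ≤
          eLpNorm ν 2 (volume : Measure (EuclideanSpace ℝ (Fin 3))).toSphere := by
  classical
  intro C hC
  by_contra hcon
  push_neg at hcon
  choose νs hmem happ hsmall using fun n : ℕ => hcon (1 / (n + 1)) (by positivity)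
  -- basic integrability and L¹ bound
  have hint : ∀ n, Integrable (νs n) muS := fun n => (hmem n).integrable one_le_two
  set m : ℝ≥0∞ := muS Set.univ with hm
  have hmfin : m ≠ ⊤ := measure_ne_top muS _
  set L : ℝ := C * m.toReal ^ ((1 : ℝ) / 2) with hL
  have hLnonneg : 0 ≤ L := by
    have := ENNReal.toReal_nonneg (a := m)
    positivity
  have hL1 : ∀ n, (∫ α, ‖νs n α‖ ∂muS) ≤ L := by
    intro n
    have h1 : eLpNorm (νs n) 1 muS ≤ eLpNorm (νs n) 2 muS * m ^ ((1 : ℝ) / 2) := by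
      have h := eLpNorm_le_eLpNorm_mul_rpow_measure_univ (p := 1) (q := 2)
        (by norm_num) (hmem n).aestronglyMeasurable
      have hexp : 1 / (1 : ℝ≥0∞).toReal - 1 / (2 : ℝ≥0∞).toReal = (1 : ℝ) / 2 := by
        norm_num
      rwa [hexp] at h
    have h2 : eLpNorm (νs n) 2 muS * m ^ ((1 : ℝ) / 2)
        ≤ ENNReal.ofReal C * m ^ ((1 : ℝ) / 2) :=
      mul_le_mul_left (hsmall n).le _
    have h3 : (∫ α, ‖νs n α‖ ∂muS) = (eLpNorm (νs n) 1 muS).toReal := by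
      rw [integral_norm_eq_lintegral_enorm (hint n).aestronglyMeasurable,
        eLpNorm_one_eq_lintegral_enorm]
    have hfin : ENNReal.ofReal C * m ^ ((1 : ℝ) / 2) ≠ ⊤ :=
      ENNReal.mul_ne_top ENNReal.ofReal_ne_top (ENNReal.rpow_ne_top_of_nonneg (by norm_num) hmfin)
    rw [h3, hL]
    calc (eLpNorm (νs n) 1 muS).toReal ≤ (ENNReal.ofReal C * m ^ ((1 : ℝ) / 2)).toReal :=
      ENNReal.toReal_mono hfin (h1.trans h2)
    _ = C * m.toReal ^ ((1 : ℝ) / 2) := by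
      rw [ENNReal.toReal_mul, ENNReal.toReal_ofReal hC.le, ← ENNReal.toReal_rpow]
  -- geometry
  obtain ⟨x₀, hx₀D⟩ := hDne
  obtain ⟨ρ, hρpos, hballD⟩ := Metric.isOpen_iff.1 hDo x₀ hx₀D
  set v : EuclideanSpace ℝ (Fin 3) := (WithLp.equiv 2 _).symm (fun k => -(θ k).im) with hv
  have hvk : ∀ k, v k = -(θ k).im := fun k => rfl
  set β : ℝ := ∑ k, ((θ k).im) ^ 2 with hβ
  have hβpos : 0 < β := by
    obtain ⟨k, hk⟩ := hIm
    exact Finset.sum_pos' (fun i _ => sq_nonneg _)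
      ⟨k, Finset.mem_univ k, (sq_nonneg _).lt_of_ne (Ne.symm (pow_ne_zero 2 hk))⟩
  set γ : ℝ := -(∑ k, (θ k).im * x₀ k) with hγ
  set δ : ℝ := ρ / (2 * (‖v‖ + 1)) with hδ
  have hvnonneg : (0:ℝ) ≤ ‖v‖ := norm_nonneg v
  have hδpos : 0 < δ := by positivity
  set tstar : ℝ := max 0 ((Real.log (L + 1) - γ) / β) + 1 with htstar
  have htstar1 : (1 : ℝ) ≤ tstar := le_add_of_nonneg_left (le_max_left _ _)
  set R : ℝ := tstar + δ + 1 with hR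
  have hRpos : 0 < R := by
    rw [hR]; linarith
  -- restated approximation hypothesis
  have happ' : ∀ n, eLpNorm (fun x => gf θ x - Wf (νs n) x) 2 (volume.restrict D)
      ≤ ENNReal.ofReal (1 / (n + 1)) := fun n => happ n
  -- Lipschitz and bound data for the F-family
  set κ : ℝ≥0 := Real.toNNReal (L * ‖v‖ * Real.exp (R * ‖v‖)) with hκ
  set M : ℝ := L * Real.exp (R * ‖v‖) with hM
  have hlip : ∀ n, LipschitzOnWith κ (Ff x₀ v (νs n)) (closedBall (0 : ℂ) R) := by
    intro n
    apply LipschitzOnWith.of_dist_le_mul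
    intro z₁ h1 z₂ h2
    rw [dist_eq_norm, dist_eq_norm, hκ, Real.coe_toNNReal _ (by positivity)]
    exact Ff_dist_le x₀ v (hint n) (hL1 n) hRpos.le h1 h2
  have hbdK : ∀ n, ∀ z ∈ closedBall (0 : ℂ) R, ‖Ff x₀ v (νs n) z‖ ≤ M := by
    intro n z hz
    calc ‖Ff x₀ v (νs n) z‖ ≤ (∫ α, ‖νs n α‖ ∂muS) * Real.exp (R * ‖v‖) :=
      Ff_norm_le x₀ v (hint n) (mem_closedBall_zero_iff.1 hz)
    _ ≤ M := mul_le_mul_of_nonneg_right (hL1 n) (Real.exp_nonneg _)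
  obtain ⟨Fi, φ, hφmono, hFconv⟩ := compact_extract κ M (fun n => Ff x₀ v (νs n)) hlip hbdK
  -- the limit is differentiable on the ball
  have hFdiff : DifferentiableOn ℂ Fi (ball (0 : ℂ) R) :=
    ((hFconv.mono ball_subset_closedBall).tendstoLocallyUniformlyOn).differentiableOn
      (Eventually.of_forall fun n => (Ff_differentiable x₀ v (hint (φ n))).differentiableOn)
      isOpen_ball
  -- the limit agrees with gf on the segment
  have hseg : ∀ t : ℝ, |t| < δ → Fi t = gf θ (x₀ + t • v) := by
    intro t ht
    set y := x₀ + t • v with hy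
    have hdyx : dist y x₀ < ρ / 2 := by
      rw [hy, dist_eq_norm, add_sub_cancel_left, norm_smul]
      calc ‖t‖ * ‖v‖ ≤ |t| * (‖v‖ + 1) := by
            rw [Real.norm_eq_abs]
            exact mul_le_mul_of_nonneg_left (by linarith) (abs_nonneg t)
      _ < δ * (‖v‖ + 1) := by
            apply mul_lt_mul_of_pos_right ht (by linarith)
      _ = ρ / 2 := by rw [hδ]; field_simp
    have hyD : y ∈ D := hballD (mem_ball.2 (by linarith))
    have htK : (t : ℂ) ∈ closedBall (0 : ℂ) R := by
      rw [mem_closedBall_zero_iff, Complex.norm_real, Real.norm_eq_abs]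
      rw [hR]; linarith
    have hFt : Tendsto (fun j => Ff x₀ v (νs (φ j)) t) atTop (𝓝 (Fi t)) :=
      hFconv.tendsto_at htK
    by_contra hne
    set c : ℝ := ‖Fi t - gf θ y‖ with hc
    have hcpos : 0 < c := by
      rw [hc, norm_pos_iff]
      exact sub_ne_zero.2 hne
    -- continuity of gf at y
    obtain ⟨r₁, hr₁pos, hr₁⟩ := Metric.continuousAt_iff.1
      ((gf_continuous θ).continuousAt (x := y)) (c / 8) (by positivity)
    set r : ℝ := min (min (r₁ / 2) ((ρ - dist y x₀) / 2)) (c / (8 * (L + 1))) with hr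
    have hrpos : 0 < r := by
      apply lt_min (lt_min (by positivity) (by linarith))
      positivity
    have hrD : ball y r ⊆ D := by
      refine Set.Subset.trans (ball_subset_ball' ?_) hballD
      have h1 : r ≤ (ρ - dist y x₀) / 2 := (min_le_left _ _).trans (min_le_right _ _)
      linarith
    -- the contradiction quantity
    set η : ℝ≥0∞ := (‖(c / 2 : ℝ)‖₊ : ℝ≥0∞) * (volume (ball y r)) ^ (1 / (2 : ℝ≥0∞).toReal)
      with hη
    have hballpos : 0 < volume (ball y r) := measure_ball_pos _ _ hrpos
    have hballfin : volume (ball y r) ≠ ⊤ := measure_ball_lt_top.ne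
    have hηpos : 0 < η := by
      rw [hη]
      apply ENNReal.mul_pos
      · simp only [ne_eq, ENNReal.coe_eq_zero, nnnorm_eq_zero]
        norm_num
        positivity
      · exact (ENNReal.rpow_pos hballpos hballfin).ne'
    have hev1 : ∀ᶠ j in atTop, ‖Ff x₀ v (νs (φ j)) t - Fi t‖ < c / 8 := by
      have := hFt.eventually (Metric.ball_mem_nhds (Fi (t : ℂ)) (show (0:ℝ) < c / 8 by positivity))
      filter_upwards [this] with j hj
      rw [← dist_eq_norm]
      exact mem_ball.1 hj
    have hev2 : ∀ᶠ j in atTop, ENNReal.ofReal (1 / (φ j + 1)) < η := by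
      have h0 : Tendsto (fun j : ℕ => ((φ j : ℝ) + 1)) atTop atTop :=
        tendsto_atTop_add_const_right _ 1
          (tendsto_natCast_atTop_atTop.comp hφmono.tendsto_atTop)
      have h1 : Tendsto (fun j : ℕ => 1 / ((φ j : ℝ) + 1)) atTop (𝓝 0) :=
        tendsto_const_nhds.div_atTop h0
      have h2 : Tendsto (fun j : ℕ => ENNReal.ofReal (1 / ((φ j : ℝ) + 1))) atTop (𝓝 0) := by
        have := (ENNReal.continuous_ofReal.tendsto 0).comp h1
        simpa [Function.comp_def] using this
      exact h2.eventually_lt_const hηpos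
    obtain ⟨j, hj1, hj2⟩ := (hev1.and hev2).exists
    have hWy : Ff x₀ v (νs (φ j)) t = Wf (νs (φ j)) y := Ff_real x₀ v (νs (φ j)) t
    have hlow : ∀ x ∈ ball y r, c / 2 ≤ ‖gf θ x - Wf (νs (φ j)) x‖ := by
      intro x hx
      have hxy : dist x y < r := mem_ball.1 hx
      have h1 : dist (gf θ x) (gf θ y) < c / 8 := by
        apply hr₁
        calc dist x y < r := hxy
        _ ≤ r₁ / 2 := (min_le_left _ _).trans (min_le_left _ _)
        _ < r₁ := by linarith
      have h2 : dist (Wf (νs (φ j)) x) (Wf (νs (φ j)) y) ≤ c / 8 := by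
        rw [dist_eq_norm]
        calc ‖Wf (νs (φ j)) x - Wf (νs (φ j)) y‖
            ≤ (∫ α, ‖νs (φ j) α‖ ∂muS) * ‖x - y‖ := Wf_sub_le x y (hint (φ j))
        _ ≤ L * r := by
            apply mul_le_mul (hL1 _) _ (norm_nonneg _) hLnonneg
            rw [← dist_eq_norm]
            exact hxy.le
        _ ≤ L * (c / (8 * (L + 1))) :=
            mul_le_mul_of_nonneg_left (min_le_right _ _) hLnonneg
        _ ≤ c / 8 := by
            rw [← mul_div_assoc, div_le_div_iff₀ (by positivity) (by norm_num)]
            nlinarith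
      have h3 : dist (Wf (νs (φ j)) y) (Fi t) < c / 8 := by
        rw [dist_eq_norm, ← hWy]
        exact hj1
      have d1 : dist (Fi (t:ℂ)) (gf θ y) ≤ dist (Fi (t:ℂ)) (Wf (νs (φ j)) y)
          + dist (Wf (νs (φ j)) y) (gf θ y) := dist_triangle _ _ _
      have d2 : dist (Wf (νs (φ j)) y) (gf θ y) ≤ dist (Wf (νs (φ j)) y) (Wf (νs (φ j)) x)
          + dist (Wf (νs (φ j)) x) (gf θ y) := dist_triangle _ _ _
      have d3 : dist (Wf (νs (φ j)) x) (gf θ y) ≤ dist (Wf (νs (φ j)) x) (gf θ x)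
          + dist (gf θ x) (gf θ y) := dist_triangle _ _ _
      have hcd : dist (Fi (t:ℂ)) (gf θ y) = c := by rw [hc, dist_eq_norm]
      have e1 : dist (Fi (t:ℂ)) (Wf (νs (φ j)) y) < c / 8 := by
        rw [dist_comm]; exact h3
      have e2 : dist (Wf (νs (φ j)) y) (Wf (νs (φ j)) x) ≤ c / 8 := by
        rw [dist_comm]; exact h2
      have hfin : c / 2 ≤ dist (Wf (νs (φ j)) x) (gf θ x) := by linarith
      rw [dist_comm, dist_eq_norm] at hfin
      exact hfin
    -- lower bound for the L² norm
    have hlower : η ≤ eLpNorm (fun x => gf θ x - Wf (νs (φ j)) x) 2 (volume.restrict D) := by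
      have hres : (volume.restrict (ball y r) : Measure (EuclideanSpace ℝ (Fin 3)))
          ≤ volume.restrict D := Measure.restrict_mono hrD le_rfl
      have hne0 : (volume.restrict (ball y r) : Measure (EuclideanSpace ℝ (Fin 3))) ≠ 0 := by
        intro h0
        have : (volume.restrict (ball y r)) Set.univ = 0 := by rw [h0]; simp
        rw [Measure.restrict_apply_univ] at this
        exact hballpos.ne' this
      have hconst : eLpNorm (fun _ : EuclideanSpace ℝ (Fin 3) => (c / 2 : ℝ)) 2
          (volume.restrict (ball y r))
          = (‖(c / 2 : ℝ)‖₊ : ℝ≥0∞) * ((volume.restrict (ball y r)) Set.univ)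
            ^ (1 / (2 : ℝ≥0∞).toReal) :=
        eLpNorm_const _ (by norm_num) hne0
      have hstep1 : η = eLpNorm (fun _ : EuclideanSpace ℝ (Fin 3) => (c / 2 : ℝ)) 2
          (volume.restrict (ball y r)) := by
        rw [hconst, Measure.restrict_apply_univ, hη]
      have hstep2 : eLpNorm (fun _ : EuclideanSpace ℝ (Fin 3) => (c / 2 : ℝ)) 2
          (volume.restrict (ball y r))
          ≤ eLpNorm (fun x => gf θ x - Wf (νs (φ j)) x) 2 (volume.restrict (ball y r)) := by
        apply eLpNorm_mono_ae
        rw [ae_restrict_iff' measurableSet_ball]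
        refine Eventually.of_forall fun x hx => ?_
        rw [Real.norm_eq_abs, _root_.abs_of_nonneg (by positivity : (0:ℝ) ≤ c / 2)]
        exact hlow x hx
      have hstep3 : eLpNorm (fun x => gf θ x - Wf (νs (φ j)) x) 2 (volume.restrict (ball y r))
          ≤ eLpNorm (fun x => gf θ x - Wf (νs (φ j)) x) 2 (volume.restrict D) :=
        eLpNorm_mono_measure _ hres
      exact hstep1.trans_le (hstep2.trans hstep3)
    have : η < η := lt_of_le_of_lt (hlower.trans (happ' (φ j))) hj2
    exact lt_irrefl _ this
  -- identity theorem
  have hFan : AnalyticOnNhd ℂ Fi (ball (0 : ℂ) R) := hFdiff.analyticOnNhd isOpen_ball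
  have hGan : AnalyticOnNhd ℂ (Gg θ x₀ v) (ball (0 : ℂ) R) :=
    ((Gg_differentiable θ x₀ v).differentiableOn).analyticOnNhd isOpen_ball
  have hfreq : ∃ᶠ z in 𝓝[≠] (0 : ℂ), Fi z = Gg θ x₀ v z := by
    have hval : ∀ n : ℕ, Fi ((δ / (n + 2) : ℝ) : ℂ) = Gg θ x₀ v ((δ / (n + 2) : ℝ) : ℂ) := by
      intro n
      have hlt : |δ / (n + 2)| < δ := by
        rw [abs_of_pos (by positivity)]
        rw [div_lt_iff₀ (by positivity)]
        nlinarith [Nat.cast_nonneg (α := ℝ) n]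
      rw [hseg _ hlt, gf_line]
    have htend : Tendsto (fun n : ℕ => ((δ / (n + 2) : ℝ) : ℂ)) atTop (𝓝[≠] (0 : ℂ)) := by
      rw [tendsto_nhdsWithin_iff]
      constructor
      · have h0 : Tendsto (fun n : ℕ => (δ / (n + 2) : ℝ)) atTop (𝓝 0) :=
          tendsto_const_nhds.div_atTop
            (tendsto_atTop_add_const_right _ 2 tendsto_natCast_atTop_atTop)
        have h1 : Tendsto (fun n : ℕ => ((δ / (n + 2) : ℝ) : ℂ)) atTop (𝓝 ((0:ℝ):ℂ)) :=
          (Complex.continuous_ofReal.tendsto 0).comp h0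
        simpa using h1
      · refine Eventually.of_forall fun n => ?_
        simp only [Set.mem_compl_iff, Set.mem_singleton_iff]
        intro h
        have : (δ / (n + 2) : ℝ) = 0 := by exact_mod_cast h
        have hpos : (0:ℝ) < δ / (n + 2) := by positivity
        linarith
    exact htend.frequently (Frequently.of_forall hval)
  have hEq : Set.EqOn Fi (Gg θ x₀ v) (ball (0 : ℂ) R) :=
    hFan.eqOn_of_preconnected_of_frequently_eq hGan (convex_ball _ _).isPreconnected
      (mem_ball_self hRpos) hfreq
  -- contradiction at tstar
  have htstarb : (tstar : ℂ) ∈ ball (0 : ℂ) R := by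
    rw [mem_ball_zero_iff, Complex.norm_real, Real.norm_eq_abs, abs_of_pos (by linarith)]
    rw [hR]; linarith
  have hFt : Tendsto (fun j => Ff x₀ v (νs (φ j)) tstar) atTop (𝓝 (Fi tstar)) :=
    hFconv.tendsto_at (ball_subset_closedBall htstarb)
  have hFbound : ‖Fi (tstar : ℂ)‖ ≤ L := by
    apply le_of_tendsto hFt.norm
    refine Eventually.of_forall fun j => ?_
    exact (Ff_real_norm_le x₀ v (hint (φ j)) tstar).trans (hL1 (φ j))
  have hGnorm : ‖Gg θ x₀ v (tstar : ℂ)‖ = Real.exp (γ + tstar * β) := by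
    rw [Gg_norm]
    congr 1
    have hsum : (∑ k, (θ k).im * v k) = -β := by
      rw [hβ, ← Finset.sum_neg_distrib]
      refine Finset.sum_congr rfl fun k _ => ?_
      rw [hvk k]; ring
    rw [hsum, hγ]; ring
  have hGbig : L < ‖Gg θ x₀ v (tstar : ℂ)‖ := by
    rw [hGnorm]
    have h1 : (Real.log (L + 1) - γ) / β ≤ max 0 ((Real.log (L + 1) - γ) / β) := le_max_right _ _
    have h2 : Real.log (L + 1) - γ ≤ β * max 0 ((Real.log (L + 1) - γ) / β) := by
      rw [← div_le_iff₀' hβpos]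
      exact h1
    have h3 : Real.log (L + 1) < γ + tstar * β := by
      rw [htstar]
      nlinarith
    calc L < L + 1 := by linarith
    _ = Real.exp (Real.log (L + 1)) := (Real.exp_log (by linarith)).symm
    _ < Real.exp (γ + tstar * β) := Real.exp_lt_exp.2 h3
  rw [hEq htstarb] at hFbound
  linarith

end MainProof
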